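/- In ℂ², let F = {f₁,f₂,f₃,f₄} = {(1,0), (0,1), (1,1), (1,−1)} with weights q = (3, 3, 3/2, 3/2). Then √(q_i) ‖f_i‖ = √3 for every i ∈ {1,2,3,4}, and moreover q_i ⟨f_i, f_i/3⟩ = 1 for every i (so with respect to the canonical dual the quantity √(q_i)‖S^{-1/2}f_i‖ is constant, i.e., the index set Λ₂ is empty); nevertheless, there exists a dual G of F distinct from the canonical dual {f_i/3} with max_{1 ≤ i ≤ 4} q_i |⟨f_i, g_i⟩| = 1. Hence constancy of √(q_i)‖f_i‖ (equivalently, emptiness of Λ₂ for a tight frame) does not imply that the canonical dual is the unique 1-erasure probability optimal dual. -/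

import Mathlib

/-- The four vectors `(1,0), (0,1), (1,1), (1,−1)` in `ℂ²`. -/
noncomputable def tfFrame : Fin 4 → EuclideanSpace ℂ (Fin 2) :=
  ![(WithLp.equiv 2 (Fin 2 → ℂ)).symm ![1, 0],
    (WithLp.equiv 2 (Fin 2 → ℂ)).symm ![0, 1],
    (WithLp.equiv 2 (Fin 2 → ℂ)).symm ![1, 1],
    (WithLp.equiv 2 (Fin 2 → ℂ)).symm ![1, -1]]

/-- The weights `q = (3, 3, 3/2, 3/2)`. -/
noncomputable def tfWeights : Fin 4 → ℝ := ![3, 3, 3/2, 3/2]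

/-- An alternative dual of `tfFrame`, distinct from the canonical dual. -/
noncomputable def tfG : Fin 4 → EuclideanSpace ℂ (Fin 2) :=
  ![(WithLp.equiv 2 (Fin 2 → ℂ)).symm ![1/3, 2],
    (WithLp.equiv 2 (Fin 2 → ℂ)).symm ![-2, 1/3],
    (WithLp.equiv 2 (Fin 2 → ℂ)).symm ![4/3, -2/3],
    (WithLp.equiv 2 (Fin 2 → ℂ)).symm ![-2/3, -4/3]]

/-- counterexample to Corollary 2 of the original paper: For the tight
frame `F = {(1,0),(0,1),(1,1),(1,−1)}` of `ℂ²` with weights `q = (3, 3, 3/2, 3/2)`, one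
has `√(q_i) ‖f_i‖ = √3` for every `i` and `q_i ⟨f_i, f_i/3⟩ = 1` for every `i` (so
`√(q_i)‖S^{-1/2} f_i‖` is constant, i.e. `Λ₂ = ∅`); nevertheless there is a dual `G` of
`F` distinct from the canonical dual `{f_i/3}` with `max_i q_i |⟨f_i, g_i⟩| = 1`.  Hence
constancy of `√(q_i)‖f_i‖` does not imply uniqueness of the optimal dual.  The paper's
inner product `⟨a, b⟩` is Mathlib's `⟪b, a⟫_ℂ`. -/
theorem tfFrame_nonunique_optimal_dual :
    (∀ i, Real.sqrt (tfWeights i) * ‖tfFrame i‖ = Real.sqrt 3) ∧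
    (∀ i, (tfWeights i : ℂ) * inner ℂ ((3 : ℂ)⁻¹ • tfFrame i) (tfFrame i) = 1) ∧
    ∃ G : Fin 4 → EuclideanSpace ℂ (Fin 2),
      G ≠ (fun i => (3 : ℂ)⁻¹ • tfFrame i) ∧
      (∀ f : EuclideanSpace ℂ (Fin 2), ∑ i, (inner ℂ (tfFrame i) f : ℂ) • G i = f) ∧
      (⨆ i, tfWeights i * ‖(inner ℂ (G i) (tfFrame i) : ℂ)‖) = 1 := by
  refine ⟨?_, ?_, tfG, ?_, ?_, ?_⟩
  · intro i
    fin_cases i <;>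
      simp [tfFrame, tfWeights, EuclideanSpace.norm_eq, Fin.sum_univ_two] <;>
      rw [show (1:ℝ)+1 = 2 by norm_num,
        div_mul_cancel₀ _ (by positivity : Real.sqrt 2 ≠ 0)]
  · intro i
    fin_cases i <;>
      simp [tfFrame, tfWeights, PiLp.inner_apply, Fin.sum_univ_two, map_ofNat,
        map_div₀, map_neg, map_inv₀, -inner_self_eq_norm_sq_to_K] <;>
      norm_num
  · intro h
    have := congrFun h 0
    have h2 := congrFun (congrArg (WithLp.equiv 2 (Fin 2 → ℂ)) this) 1
    simp [tfG, tfFrame] at h2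
  · intro f
    refine (WithLp.equiv 2 (Fin 2 → ℂ)).injective (funext fun j => ?_)
    fin_cases j <;>
      simp [tfG, tfFrame, Fin.sum_univ_four, PiLp.inner_apply, Fin.sum_univ_two] <;>
      ring
  · have : ∀ i : Fin 4, tfWeights i * ‖(inner ℂ (tfG i) (tfFrame i) : ℂ)‖ = 1 := by
      intro i
      fin_cases i <;>
        norm_num [tfG, tfFrame, tfWeights, PiLp.inner_apply, Fin.sum_univ_two,
          map_ofNat, map_div₀, map_neg, Complex.norm_ofNat]
    simp only [this]
    exact ciSup_const
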